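/- Let p < q < r be primes with p·q dividing r − 1, and let t be an integer whose residue class modulo r is a unit of multiplicative order p·q. Then the group G(pq, r, t) has exactly p·q + (r − 1)/(p·q) conjugacy classes. -/

import Mathlib

/-- The units of `ZMod e` act on `Multiplicative (ZMod e)` as (multiplicative) automorphisms. -/
def unitsMulAut (e : ℕ) : (ZMod e)ˣ →* MulAut (Multiplicative (ZMod e)) where
  toFun u := AddEquiv.toMultiplicative (DistribMulAction.toAddAut (ZMod e)ˣ (ZMod e) u)
  map_one' := by
    ext x
    show Multiplicative.ofAdd ((1 : (ZMod e)ˣ) • x.toAdd) = x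
    simp
  map_mul' u v := by
    ext x
    show Multiplicative.ofAdd (((u * v) : (ZMod e)ˣ) • x.toAdd)
      = Multiplicative.ofAdd (u • v • x.toAdd)
    rw [mul_smul]

/-- The homomorphism `Multiplicative (ZMod d) →* (ZMod e)ˣ` sending `a` to `u ^ a`,
well defined since `u ^ d = 1`. -/
def zmodPowHom {e : ℕ} (d : ℕ) (u : (ZMod e)ˣ) (hu : u ^ d = 1) :
    Multiplicative (ZMod d) →* (ZMod e)ˣ :=
  AddMonoidHom.toMultiplicativeLeft
    (ZMod.lift d ⟨zmultiplesHom (Additive (ZMod e)ˣ) (Additive.ofMul u), by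
      simpa [zmultiplesHom, ← ofMul_pow] using congrArg Additive.ofMul hu⟩)

/-- The group `G(d,e,t)` where `u` is the unit of `ZMod e` given by `t` :
the semidirect product `(ℤ/eℤ) ⋊ (ℤ/dℤ)` in which `a ∈ ℤ/dℤ` acts on `ℤ/eℤ` by
`b ↦ t ^ a * b`.  This is the group with presentation
`⟨x, y | x ^ d = 1, y ^ e = 1, x⁻¹ * y * x = y ^ t⟩`, the element `(b, a)`
corresponding to `x ^ a * y ^ b`. -/
abbrev Gdet (d e : ℕ) (u : (ZMod e)ˣ) (hu : u ^ d = 1) : Type :=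
  SemidirectProduct (Multiplicative (ZMod e)) (Multiplicative (ZMod d))
    ((unitsMulAut e).comp (zmodPowHom d u hu))

section Aux
variable {d r : ℕ} (u : (ZMod r)ˣ) (hu : u ^ d = 1)

lemma zmodPowHom_intCast (x : ℤ) :
    zmodPowHom d u hu (Multiplicative.ofAdd ((x : ZMod d))) = u ^ x := by
  unfold zmodPowHom
  change Additive.toMul ((ZMod.lift d _) ((x : ZMod d))) = u ^ x
  simp [AddMonoidHom.toMultiplicativeLeft, ZMod.lift_coe, zmultiplesHom]

lemma zmodPowHom_eq_one_iff [NeZero d] (hord : orderOf u = d) (a : ZMod d) :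
    zmodPowHom d u hu (Multiplicative.ofAdd a) = 1 ↔ a = 0 := by
  have ha : ((a.val : ℤ) : ZMod d) = a := by
    push_cast
    exact ZMod.natCast_rightInverse a
  conv_lhs => rw [← ha]
  rw [zmodPowHom_intCast, zpow_natCast, ← orderOf_dvd_iff_pow_eq_one, hord,
    ← ZMod.natCast_eq_zero_iff,
    show ((a.val : ℕ) : ZMod d) = a from ZMod.natCast_rightInverse a]

lemma gdet_mul_left_toAdd (g h : Gdet d r u hu) :
    ((g * h).left).toAdd = g.left.toAdd
      + ((zmodPowHom d u hu g.right : (ZMod r)ˣ) : ZMod r) * h.left.toAdd := rfl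

lemma gdet_commute_iff (g h : Gdet d r u hu) :
    Commute g h ↔
      (((zmodPowHom d u hu g.right : (ZMod r)ˣ) : ZMod r) - 1) * h.left.toAdd
        = (((zmodPowHom d u hu h.right : (ZMod r)ˣ) : ZMod r) - 1) * g.left.toAdd := by
  show g * h = h * g ↔ _
  rw [SemidirectProduct.ext_iff]
  have h2 : (g * h).right = (h * g).right := mul_comm g.right h.right
  rw [and_iff_left h2]
  constructor
  · intro H
    have := congrArg Multiplicative.toAdd H
    rw [gdet_mul_left_toAdd, gdet_mul_left_toAdd] at this
    linear_combination this
  · intro H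
    have : ((g * h).left).toAdd = ((h * g).left).toAdd := by
      rw [gdet_mul_left_toAdd, gdet_mul_left_toAdd]
      linear_combination H
    exact Multiplicative.toAdd.injective this

/-- The underlying equiv of `Gdet` with a product. -/
def gdetEquiv : Gdet d r u hu ≃ ZMod r × ZMod d where
  toFun g := (g.left.toAdd, g.right.toAdd)
  invFun x := ⟨Multiplicative.ofAdd x.1, Multiplicative.ofAdd x.2⟩
  left_inv g := rfl
  right_inv x := rfl

lemma line_card (hr : r.Prime) (c1 c2 : ZMod r) :
    Nat.card {b : ZMod r × ZMod r // c1 * b.2 = c2 * b.1}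
      = if c1 = 0 ∧ c2 = 0 then r ^ 2 else r := by
  haveI : Fact r.Prime := ⟨hr⟩
  split_ifs with h
  · obtain ⟨h1, h2⟩ := h
    rw [Nat.card_congr (Equiv.subtypeUnivEquiv (by simp [h1, h2]))]
    simp [Nat.card_prod, Nat.card_zmod, sq]
  · by_cases h1 : c1 = 0
    · have h2 : c2 ≠ 0 := fun hc => h ⟨h1, hc⟩
      have e : {b : ZMod r × ZMod r // c1 * b.2 = c2 * b.1} ≃ ZMod r :=
        { toFun := fun s => s.1.2
          invFun := fun x => ⟨(0, x), by simp [h1]⟩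
          left_inv := fun s => by
            obtain ⟨⟨b1, b2⟩, hb⟩ := s
            rw [h1, zero_mul] at hb
            have h0 : b1 = 0 := (mul_eq_zero.1 hb.symm).resolve_left h2
            exact Subtype.ext (Prod.ext h0.symm rfl)
          right_inv := fun x => rfl }
      rw [Nat.card_congr e, Nat.card_zmod]
    · have e : {b : ZMod r × ZMod r // c1 * b.2 = c2 * b.1} ≃ ZMod r :=
        { toFun := fun s => s.1.1
          invFun := fun x => ⟨(x, c1⁻¹ * (c2 * x)), by rw [mul_inv_cancel_left₀ h1]⟩
          left_inv := fun s => by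
            obtain ⟨⟨b1, b2⟩, hb⟩ := s
            exact Subtype.ext (Prod.ext rfl
              (show c1⁻¹ * (c2 * b1) = b2 by rw [← hb, inv_mul_cancel_left₀ h1]))
          right_inv := fun x => rfl }
      rw [Nat.card_congr e, Nat.card_zmod]

lemma comm_card [NeZero d] (hr : r.Prime) (hord : orderOf u = d) :
    Nat.card {x : Gdet d r u hu × Gdet d r u hu // Commute x.1 x.2}
      = r ^ 2 + (d ^ 2 - 1) * r := by
  haveI : NeZero r := ⟨hr.ne_zero⟩
  have e1 : {x : Gdet d r u hu × Gdet d r u hu // Commute x.1 x.2} ≃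
      {y : (ZMod r × ZMod d) × (ZMod r × ZMod d) //
        (((zmodPowHom d u hu (Multiplicative.ofAdd y.1.2) : (ZMod r)ˣ) : ZMod r) - 1) * y.2.1
        = (((zmodPowHom d u hu (Multiplicative.ofAdd y.2.2) : (ZMod r)ˣ) : ZMod r) - 1) * y.1.1} :=
    Equiv.subtypeEquiv ((gdetEquiv u hu).prodCongr (gdetEquiv u hu))
      (fun x => gdet_commute_iff u hu x.1 x.2)
  rw [Nat.card_congr e1]
  have e2 : {y : (ZMod r × ZMod d) × (ZMod r × ZMod d) //
        (((zmodPowHom d u hu (Multiplicative.ofAdd y.1.2) : (ZMod r)ˣ) : ZMod r) - 1) * y.2.1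
        = (((zmodPowHom d u hu (Multiplicative.ofAdd y.2.2) : (ZMod r)ˣ) : ZMod r) - 1) * y.1.1}
      ≃ {z : (ZMod d × ZMod d) × (ZMod r × ZMod r) //
        (((zmodPowHom d u hu (Multiplicative.ofAdd z.1.1) : (ZMod r)ˣ) : ZMod r) - 1) * z.2.2
        = (((zmodPowHom d u hu (Multiplicative.ofAdd z.1.2) : (ZMod r)ˣ) : ZMod r) - 1) * z.2.1} :=
    { toFun := fun x => ⟨((x.1.1.2, x.1.2.2), (x.1.1.1, x.1.2.1)), x.2⟩
      invFun := fun z => ⟨((z.1.2.1, z.1.1.1), (z.1.2.2, z.1.1.2)), z.2⟩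
      left_inv := fun x => rfl
      right_inv := fun z => rfl }
  rw [Nat.card_congr e2, Nat.card_congr (Equiv.subtypeProdEquivSigmaSubtype
    (fun (a : ZMod d × ZMod d) (b : ZMod r × ZMod r) =>
      (((zmodPowHom d u hu (Multiplicative.ofAdd a.1) : (ZMod r)ˣ) : ZMod r) - 1) * b.2
      = (((zmodPowHom d u hu (Multiplicative.ofAdd a.2) : (ZMod r)ˣ) : ZMod r) - 1) * b.1)),
    Nat.card_eq_fintype_card, Fintype.card_sigma]
  have hterm : ∀ a : ZMod d × ZMod d,
      Nat.card {b : ZMod r × ZMod r //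
        (((zmodPowHom d u hu (Multiplicative.ofAdd a.1) : (ZMod r)ˣ) : ZMod r) - 1) * b.2
        = (((zmodPowHom d u hu (Multiplicative.ofAdd a.2) : (ZMod r)ˣ) : ZMod r) - 1) * b.1}
      = if a = 0 then r ^ 2 else r := by
    intro a
    rw [line_card hr]
    congr 1
    have key : ∀ c : ZMod d,
        ((zmodPowHom d u hu (Multiplicative.ofAdd c) : (ZMod r)ˣ) : ZMod r) - 1 = 0 ↔ c = 0 := by
      intro c
      rw [sub_eq_zero, Units.val_eq_one, zmodPowHom_eq_one_iff u hu hord]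
    rw [eq_iff_iff, key, key, Prod.ext_iff]
    simp
  rw [Finset.sum_congr rfl (fun a _ => by rw [← Nat.card_eq_fintype_card, hterm a]),
    Finset.sum_ite, Finset.sum_const,
    Finset.sum_const, Finset.filter_eq', if_pos (Finset.mem_univ _)]
  rw [Finset.card_singleton, Finset.filter_not, Finset.card_sdiff_of_subset (Finset.filter_subset _ _),
    Finset.filter_eq', if_pos (Finset.mem_univ _), Finset.card_singleton, Finset.card_univ]
  simp [Fintype.card_prod, ZMod.card, sq]

end Aux

/-- **Class number of groups of order `pqr` with `d = pq`.**
Let `p < q < r` be primes with `p * q ∣ r - 1`, and let `t` be an integer whose residue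
class modulo `r` is a unit of multiplicative order `p * q`.  Then `G(pq, r, t)` has
exactly `p * q + (r - 1) / (p * q)` conjugacy classes. -/
theorem classNumber_pqr_d_eq_pq (p q r : ℕ) (hp : p.Prime) (hq : q.Prime) (hr : r.Prime)
    (hpq : p < q) (hqr : q < r) (hBC : p * q ∣ r - 1) (t : ℤ)
    (u : (ZMod r)ˣ) (hu : (u : ZMod r) = (t : ZMod r)) (hord : orderOf u = p * q) :
    Nat.card (ConjClasses
        (Gdet (p * q) r u (by rw [← hord]; exact pow_orderOf_eq_one u)))
      = p * q + (r - 1) / (p * q) := by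
  have hu' : u ^ (p * q) = 1 := by rw [← hord]; exact pow_orderOf_eq_one u
  haveI : NeZero (p * q) := ⟨Nat.mul_ne_zero hp.pos.ne' hq.pos.ne'⟩
  haveI : NeZero r := ⟨hr.pos.ne'⟩
  have h1 := card_comm_eq_card_conjClasses_mul_card (Gdet (p * q) r u hu')
  rw [comm_card u hu' hr hord] at h1
  have hGcard : Nat.card (Gdet (p * q) r u hu') = r * (p * q) := by
    rw [Nat.card_congr (gdetEquiv u hu'), Nat.card_prod, Nat.card_zmod, Nat.card_zmod]
  rw [hGcard] at h1
  obtain ⟨k, hk⟩ := hBC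
  have hm1 : 1 ≤ (p * q) ^ 2 := Nat.one_le_pow _ _ (Nat.mul_pos hp.pos hq.pos)
  have h2le : 2 ≤ r := hr.two_le
  have hrZ : (r : ℤ) = (p : ℤ) * q * k + 1 := by
    have h1r : (1 : ℕ) ≤ r := by omega
    have := congrArg (Nat.cast (R := ℤ)) hk
    push_cast [Nat.cast_sub h1r] at this
    linarith
  have h1' := congrArg (Nat.cast (R := ℤ)) h1
  push_cast [Nat.cast_sub hm1] at h1'
  have hNZ : (Nat.card (ConjClasses (Gdet (p * q) r u hu')) : ℤ) = (p * q : ℕ) + k := by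
    have hne : ((r : ℤ) * ((p : ℤ) * q)) ≠ 0 := by
      have : (0 : ℤ) < (r : ℤ) * ((p : ℤ) * q) := by
        have hp0 : (0:ℤ) < p := by exact_mod_cast hp.pos
        have hq0 : (0:ℤ) < q := by exact_mod_cast hq.pos
        have hr0 : (0:ℤ) < r := by exact_mod_cast hr.pos
        positivity
      linarith
    apply mul_right_cancel₀ hne
    rw [← h1']
    push_cast
    rw [hrZ]
    push_cast
    ring
  rw [hk, Nat.mul_div_cancel_left k (Nat.mul_pos hp.pos hq.pos)]
  exact_mod_cast hNZ
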